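/- arXiv:1506.06574 — 2 statements merged into one kernel-verified Lean document; each statement's English description precedes it below -/
import Mathlib

section
/- (Universal property of A^{ue}.) Let A be a DG Poisson algebra over a field k with Poisson bracket of degree p. For any triple (B, f, g) having property P with respect to A, there exists a unique DG-algebra homomorphism φ : A^{ue} → B of degree 0 such that f = φ ∘ M and g = φ ∘ H, where M, H : A → A^{ue} are the canonical maps a ↦ M_a, a ↦ H_a. -/
noncomputable section

/-- A (graded-commutative) DG Poisson algebra structure, with Poisson bracket of degree `p`,
on a `ℤ`-graded `k`-algebra `A` with grading `𝒜`, differential `dA` and bracket `br`.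
All axioms are stated for homogeneous elements, and signs are the Koszul signs. -/
structure IsDGPoissonAlgebra (k : Type) [Field k] (A : Type) [Ring A] [Algebra k A]
    (𝒜 : ℤ → Submodule k A) (dA : A →ₗ[k] A)
    (br : A →ₗ[k] A →ₗ[k] A) (p : ℤ) : Prop where
  comm : ∀ (i j : ℤ) (a b : A), a ∈ 𝒜 i → b ∈ 𝒜 j →
    a * b = ((-1 : k) ^ (i * j)) • (b * a)
  d_mem : ∀ (i : ℤ) (a : A), a ∈ 𝒜 i → dA a ∈ 𝒜 (i + 1)
  d_sq : ∀ a : A, dA (dA a) = 0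
  d_mul : ∀ (i j : ℤ) (a b : A), a ∈ 𝒜 i → b ∈ 𝒜 j →
    dA (a * b) = dA a * b + ((-1 : k) ^ i) • (a * dA b)
  br_mem : ∀ (i j : ℤ) (a b : A), a ∈ 𝒜 i → b ∈ 𝒜 j → br a b ∈ 𝒜 (i + j + p)
  antisymm : ∀ (i j : ℤ) (a b : A), a ∈ 𝒜 i → b ∈ 𝒜 j →
    br a b = -(((-1 : k) ^ ((i + p) * (j + p))) • br b a)
  jacobi : ∀ (i j l : ℤ) (a b c : A), a ∈ 𝒜 i → b ∈ 𝒜 j → c ∈ 𝒜 l →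
    br a (br b c) = br (br a b) c + ((-1 : k) ^ ((i + p) * (j + p))) • br b (br a c)
  d_br : ∀ (i j : ℤ) (a b : A), a ∈ 𝒜 i → b ∈ 𝒜 j →
    dA (br a b) = br (dA a) b + ((-1 : k) ^ (i + p)) • br a (dA b)
  poisson : ∀ (i j l : ℤ) (a b c : A), a ∈ 𝒜 i → b ∈ 𝒜 j → c ∈ 𝒜 l →
    br a (b * c) = br a b * c + ((-1 : k) ^ ((i + p) * j)) • (b * br a c)

/-- A (not necessarily commutative) DG algebra structure on a `ℤ`-graded `k`-algebra. -/
structure IsDGAlgebra (k : Type) [Field k] (B : Type) [Ring B] [Algebra k B]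
    (ℬ : ℤ → Submodule k B) (dB : B →ₗ[k] B) : Prop where
  graded_monoid : SetLike.GradedMonoid ℬ
  decomp : Nonempty (DirectSum.Decomposition ℬ)
  d_mem : ∀ (i : ℤ) (x : B), x ∈ ℬ i → dB x ∈ ℬ (i + 1)
  d_sq : ∀ x : B, dB (dB x) = 0
  d_mul : ∀ (i j : ℤ) (x y : B), x ∈ ℬ i → y ∈ ℬ j →
    dB (x * y) = dB x * y + ((-1 : k) ^ i) • (x * dB y)
/-- The defining relations of the universal enveloping algebra of a DG Poisson algebra,
inside the free algebra (tensor algebra) on two copies `M_a = ι (a,0)`, `H_a = ι (0,a)`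
of the underlying vector space of `A`. -/
inductive UERel (k : Type) [Field k] (A : Type) [Ring A] [Algebra k A]
    (𝒜 : ℤ → Submodule k A) (br : A →ₗ[k] A →ₗ[k] A) (p : ℤ) :
    TensorAlgebra k (A × A) → TensorAlgebra k (A × A) → Prop
  | mul_M : ∀ (i j : ℤ) (a b : A), a ∈ 𝒜 i → b ∈ 𝒜 j →
      UERel k A 𝒜 br p (TensorAlgebra.ι k (a * b, (0 : A)))
        (TensorAlgebra.ι k (a, (0 : A)) * TensorAlgebra.ι k (b, (0 : A)))
  | br_H : ∀ (i j : ℤ) (a b : A), a ∈ 𝒜 i → b ∈ 𝒜 j →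
      UERel k A 𝒜 br p (TensorAlgebra.ι k ((0 : A), br a b))
        (TensorAlgebra.ι k ((0 : A), a) * TensorAlgebra.ι k ((0 : A), b) -
          ((-1 : k) ^ ((i + p) * (j + p))) •
            (TensorAlgebra.ι k ((0 : A), b) * TensorAlgebra.ι k ((0 : A), a)))
  | mul_H : ∀ (i j : ℤ) (a b : A), a ∈ 𝒜 i → b ∈ 𝒜 j →
      UERel k A 𝒜 br p (TensorAlgebra.ι k ((0 : A), a * b))
        (TensorAlgebra.ι k (a, (0 : A)) * TensorAlgebra.ι k ((0 : A), b) +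
          ((-1 : k) ^ (i * j)) •
            (TensorAlgebra.ι k (b, (0 : A)) * TensorAlgebra.ι k ((0 : A), a)))
  | br_M : ∀ (i j : ℤ) (a b : A), a ∈ 𝒜 i → b ∈ 𝒜 j →
      UERel k A 𝒜 br p (TensorAlgebra.ι k (br a b, (0 : A)))
        (TensorAlgebra.ι k ((0 : A), a) * TensorAlgebra.ι k (b, (0 : A)) -
          ((-1 : k) ^ ((i + p) * j)) •
            (TensorAlgebra.ι k (b, (0 : A)) * TensorAlgebra.ι k ((0 : A), a)))
  | one_M : UERel k A 𝒜 br p (TensorAlgebra.ι k ((1 : A), (0 : A))) 1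

/-- The universal enveloping algebra `A^{ue}` of a DG Poisson algebra `A`. -/
abbrev UEA (k : Type) [Field k] (A : Type) [Ring A] [Algebra k A]
    (𝒜 : ℤ → Submodule k A) (br : A →ₗ[k] A →ₗ[k] A) (p : ℤ) : Type :=
  RingQuot (UERel k A 𝒜 br p)

/-- The canonical linear map `a ↦ M_a` into the universal enveloping algebra. -/
def ueM (k : Type) [Field k] (A : Type) [Ring A] [Algebra k A]
    (𝒜 : ℤ → Submodule k A) (br : A →ₗ[k] A →ₗ[k] A) (p : ℤ) :
    A →ₗ[k] UEA k A 𝒜 br p :=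
  (RingQuot.mkAlgHom k (UERel k A 𝒜 br p)).toLinearMap.comp
    ((TensorAlgebra.ι k).comp (LinearMap.inl k A A))

/-- The canonical linear map `a ↦ H_a` into the universal enveloping algebra. -/
def ueH (k : Type) [Field k] (A : Type) [Ring A] [Algebra k A]
    (𝒜 : ℤ → Submodule k A) (br : A →ₗ[k] A →ₗ[k] A) (p : ℤ) :
    A →ₗ[k] UEA k A 𝒜 br p :=
  (RingQuot.mkAlgHom k (UERel k A 𝒜 br p)).toLinearMap.comp
    ((TensorAlgebra.ι k).comp (LinearMap.inr k A A))

/-- The canonical DG-algebra structure on the universal enveloping algebra `A^{ue}`: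
a grading `ℬ` for which `M_a` has degree `|a|` and `H_a` has degree `|a| + p`, and a
differential `D` with `D M_a = M_{dA a}`, `D H_a = H_{dA a}`, making `A^{ue}` a DG algebra. -/
structure IsUEADG (k : Type) [Field k] (A : Type) [Ring A] [Algebra k A]
    (𝒜 : ℤ → Submodule k A) (dA : A →ₗ[k] A) (br : A →ₗ[k] A →ₗ[k] A) (p : ℤ)
    (ℬ : ℤ → Submodule k (UEA k A 𝒜 br p))
    (D : UEA k A 𝒜 br p →ₗ[k] UEA k A 𝒜 br p) : Prop where
  m_mem : ∀ (i : ℤ) (a : A), a ∈ 𝒜 i → ueM k A 𝒜 br p a ∈ ℬ i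
  h_mem : ∀ (i : ℤ) (a : A), a ∈ 𝒜 i → ueH k A 𝒜 br p a ∈ ℬ (i + p)
  d_m : ∀ a : A, D (ueM k A 𝒜 br p a) = ueM k A 𝒜 br p (dA a)
  d_h : ∀ a : A, D (ueH k A 𝒜 br p a) = ueH k A 𝒜 br p (dA a)
  dga : IsDGAlgebra k (UEA k A 𝒜 br p) ℬ D
/-- Property `𝒫` for a triple `(B, f, g)` with respect to a DG Poisson algebra `A` with
bracket of degree `p`:  `f` is a degree-0 DG-algebra map, `g` is a degree-`p` DG Lie algebra
map into `B` with the graded-commutator bracket, and the mixed conditions (P3), (P4) hold. -/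
structure IsPTriple (k : Type) [Field k] (A : Type) [Ring A] [Algebra k A]
    (B : Type) [Ring B] [Algebra k B]
    (𝒜 : ℤ → Submodule k A) (dA : A →ₗ[k] A) (br : A →ₗ[k] A →ₗ[k] A) (p : ℤ)
    (ℬ : ℤ → Submodule k B) (dB : B →ₗ[k] B)
    (f g : A →ₗ[k] B) : Prop where
  f_one : f 1 = 1
  f_mul : ∀ a b : A, f (a * b) = f a * f b
  f_mem : ∀ (i : ℤ) (a : A), a ∈ 𝒜 i → f a ∈ ℬ i
  f_d : ∀ a : A, f (dA a) = dB (f a)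
  g_mem : ∀ (i : ℤ) (a : A), a ∈ 𝒜 i → g a ∈ ℬ (i + p)
  g_d : ∀ a : A, g (dA a) = dB (g a)
  g_br : ∀ (i j : ℤ) (a b : A), a ∈ 𝒜 i → b ∈ 𝒜 j →
    g (br a b) = g a * g b - ((-1 : k) ^ ((i + p) * (j + p))) • (g b * g a)
  f_br : ∀ (i j : ℤ) (a b : A), a ∈ 𝒜 i → b ∈ 𝒜 j →
    f (br a b) = g a * f b - ((-1 : k) ^ ((i + p) * j)) • (f b * g a)
  g_mul : ∀ (i j : ℤ) (a b : A), a ∈ 𝒜 i → b ∈ 𝒜 j →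
    g (a * b) = f a * g b + ((-1 : k) ^ (i * j)) • (f b * g a)

/-- **universal property of `A^{ue}`.**  For any triple `(B, f, g)` with
property `𝒫` with respect to the DG Poisson algebra `A`, there is a unique DG-algebra map
`φ : A^{ue} → B` of degree 0 with `f = φ ∘ M` and `g = φ ∘ H`. -/
theorem ue_universal_property
    (k : Type) [Field k] (A : Type) [Ring A] [Algebra k A]
    (𝒜 : ℤ → Submodule k A) [GradedAlgebra 𝒜] (dA : A →ₗ[k] A)
    (br : A →ₗ[k] A →ₗ[k] A) (p : ℤ)
    (hA : IsDGPoissonAlgebra k A 𝒜 dA br p)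
    -- the canonical DG-algebra structure on `A^{ue}`
    (ℬue : ℤ → Submodule k (UEA k A 𝒜 br p))
    (Due : UEA k A 𝒜 br p →ₗ[k] UEA k A 𝒜 br p)
    (hue : IsUEADG k A 𝒜 dA br p ℬue Due)
    -- a triple `(B, f, g)` with property `𝒫`
    (B : Type) [Ring B] [Algebra k B]
    (ℬ : ℤ → Submodule k B) (dB : B →ₗ[k] B)
    (hB : IsDGAlgebra k B ℬ dB)
    (f g : A →ₗ[k] B)
    (hfg : IsPTriple k A B 𝒜 dA br p ℬ dB f g) :
    ∃! φ : UEA k A 𝒜 br p →ₐ[k] B,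
      (∀ (i : ℤ) (x : UEA k A 𝒜 br p), x ∈ ℬue i → φ x ∈ ℬ i) ∧
      (∀ x : UEA k A 𝒜 br p, φ (Due x) = dB (φ x)) ∧
      (∀ a : A, φ (ueM k A 𝒜 br p a) = f a) ∧
      (∀ a : A, φ (ueH k A 𝒜 br p a) = g a) := by
  classical
  -- the lift from the tensor algebra
  set Φ0 : TensorAlgebra k (A × A) →ₐ[k] B := TensorAlgebra.lift k (f.coprod g) with hΦ0
  have hΦ0ι : ∀ v : A × A, Φ0 (TensorAlgebra.ι k v) = f v.1 + g v.2 := by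
    intro v; simp [hΦ0, TensorAlgebra.lift_ι_apply]
  have hrel : ∀ ⦃x y : TensorAlgebra k (A × A)⦄, UERel k A 𝒜 br p x y → Φ0 x = Φ0 y := by
    intro x y h
    induction h with
    | mul_M i j a b ha hb =>
        simp [hΦ0ι, hfg.f_mul]
    | br_H i j a b ha hb =>
        simp [hΦ0ι, hfg.g_br i j a b ha hb]
    | mul_H i j a b ha hb =>
        simp [hΦ0ι, hfg.g_mul i j a b ha hb]
    | br_M i j a b ha hb =>
        simp [hΦ0ι, hfg.f_br i j a b ha hb]
    | one_M =>
        simp [hΦ0ι, hfg.f_one]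
  set φ : UEA k A 𝒜 br p →ₐ[k] B := RingQuot.liftAlgHom k ⟨Φ0, hrel⟩ with hφdef
  have hφmk : ∀ t : TensorAlgebra k (A × A),
      φ (RingQuot.mkAlgHom k (UERel k A 𝒜 br p) t) = Φ0 t := by
    intro t; simp [hφdef, RingQuot.liftAlgHom_mkAlgHom_apply]
  have hφM : ∀ a : A, φ (ueM k A 𝒜 br p a) = f a := by
    intro a
    simp only [ueM, LinearMap.coe_comp, Function.comp_apply, LinearMap.inl_apply,
      AlgHom.toLinearMap_apply]
    rw [hφmk, hΦ0ι]; simp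
  have hφH : ∀ a : A, φ (ueH k A 𝒜 br p a) = g a := by
    intro a
    simp only [ueH, LinearMap.coe_comp, Function.comp_apply, LinearMap.inr_apply,
      AlgHom.toLinearMap_apply]
    rw [hφmk, hΦ0ι]; simp
  -- one-in-degree-zero and d(1) = 0 facts
  have hBone : (1 : B) ∈ ℬ 0 := hB.graded_monoid.one_mem
  have hueone : (1 : UEA k A 𝒜 br p) ∈ ℬue 0 := hue.dga.graded_monoid.one_mem
  have hdB1 : dB 1 = 0 := by
    have := hB.d_mul 0 0 1 1 hBone hBone
    simp only [one_mul, mul_one, zpow_zero, one_smul] at this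
    exact (left_eq_add.mp this)
  have hDue1 : Due (1 : UEA k A 𝒜 br p) = 0 := by
    have := hue.dga.d_mul 0 0 1 1 hueone hueone
    simp only [one_mul, mul_one, zpow_zero, one_smul] at this
    exact (left_eq_add.mp this)
  -- the family of "good homogeneous" submodules
  set S : ℤ → Submodule k (UEA k A 𝒜 br p) := fun i =>
    ℬue i ⊓ (ℬ i).comap φ.toLinearMap ⊓
      LinearMap.ker (φ.toLinearMap ∘ₗ Due - dB ∘ₗ φ.toLinearMap) with hSdef
  have memS : ∀ (i : ℤ) (x : UEA k A 𝒜 br p),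
      x ∈ S i ↔ x ∈ ℬue i ∧ φ x ∈ ℬ i ∧ φ (Due x) = dB (φ x) := by
    intro i x
    simp [hSdef, Submodule.mem_inf, LinearMap.mem_ker, LinearMap.sub_apply, sub_eq_zero,
      and_assoc]
  have hM_S : ∀ (i : ℤ) (a : A), a ∈ 𝒜 i → ueM k A 𝒜 br p a ∈ S i := by
    intro i a ha
    refine (memS i _).2 ⟨hue.m_mem i a ha, ?_, ?_⟩
    · rw [hφM]; exact hfg.f_mem i a ha
    · rw [hue.d_m, hφM, hφM, hfg.f_d]
  have hH_S : ∀ (i : ℤ) (a : A), a ∈ 𝒜 i → ueH k A 𝒜 br p a ∈ S (i + p) := by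
    intro i a ha
    refine (memS (i + p) _).2 ⟨hue.h_mem i a ha, ?_, ?_⟩
    · rw [hφH]; exact hfg.g_mem i a ha
    · rw [hue.d_h, hφH, hφH, hfg.g_d]
  have hone_S : (1 : UEA k A 𝒜 br p) ∈ S 0 := by
    refine (memS 0 _).2 ⟨hueone, ?_, ?_⟩
    · rw [map_one]; exact hBone
    · rw [hDue1, map_zero, map_one, hdB1]
  have hmul_S : ∀ (i j : ℤ) (x y : UEA k A 𝒜 br p), x ∈ S i → y ∈ S j →
      x * y ∈ S (i + j) := by
    intro i j x y hx hy
    obtain ⟨hx1, hx2, hx3⟩ := (memS i x).1 hx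
    obtain ⟨hy1, hy2, hy3⟩ := (memS j y).1 hy
    refine (memS (i + j) _).2 ⟨hue.dga.graded_monoid.mul_mem hx1 hy1, ?_, ?_⟩
    · rw [map_mul]; exact hB.graded_monoid.mul_mem hx2 hy2
    · rw [hue.dga.d_mul i j x y hx1 hy1, map_add, map_mul, map_smul, map_mul,
        hx3, hy3, map_mul, hB.d_mul i j (φ x) (φ y) hx2 hy2]
  -- everything lies in the supremum of the `S i`
  have hMsup : ∀ a : A, ueM k A 𝒜 br p a ∈ ⨆ i, S i := by
    intro a
    induction a using DirectSum.Decomposition.inductionOn 𝒜 with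
    | zero => rw [map_zero]; exact zero_mem _
    | homogeneous m =>
        rename_i i
        exact Submodule.mem_iSup_of_mem i (hM_S i (m : A) m.2)
    | add x y hx hy => rw [map_add]; exact add_mem hx hy
  have hHsup : ∀ a : A, ueH k A 𝒜 br p a ∈ ⨆ i, S i := by
    intro a
    induction a using DirectSum.Decomposition.inductionOn 𝒜 with
    | zero => rw [map_zero]; exact zero_mem _
    | homogeneous m =>
        rename_i i
        exact Submodule.mem_iSup_of_mem (i + p) (hH_S i (m : A) m.2)
    | add x y hx hy => rw [map_add]; exact add_mem hx hy
  have hmulsup : ∀ x ∈ ⨆ i, S i, ∀ y ∈ ⨆ i, S i, x * y ∈ ⨆ i, S i := by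
    intro x hx
    refine Submodule.iSup_induction (motive := fun x => ∀ y ∈ ⨆ i, S i, x * y ∈ ⨆ i, S i)
      S hx ?_ ?_ ?_
    · intro i x hxS y hy
      refine Submodule.iSup_induction (motive := fun y => x * y ∈ ⨆ i, S i) S hy ?_ ?_ ?_
      · intro j y hyS
        exact Submodule.mem_iSup_of_mem (i + j) (hmul_S i j x y hxS hyS)
      · show x * 0 ∈ ⨆ i, S i
        rw [mul_zero]; exact zero_mem _
      · intro y z hy hz
        show x * (y + z) ∈ ⨆ i, S i
        rw [mul_add]; exact add_mem hy hz
    · show ∀ y ∈ ⨆ i, S i, (0 : UEA k A 𝒜 br p) * y ∈ ⨆ i, S i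
      intro y hy; rw [zero_mul]; exact zero_mem _
    · intro a b ha hb
      show ∀ y ∈ ⨆ i, S i, (a + b) * y ∈ ⨆ i, S i
      intro y hy; rw [add_mul]; exact add_mem (ha y hy) (hb y hy)
  have htop : ∀ x : UEA k A 𝒜 br p, x ∈ ⨆ i, S i := by
    intro x
    obtain ⟨t, rfl⟩ := RingQuot.mkAlgHom_surjective k (UERel k A 𝒜 br p) x
    induction t using TensorAlgebra.induction with
    | algebraMap r =>
        rw [AlgHom.commutes, Algebra.algebraMap_eq_smul_one]
        exact Submodule.smul_mem _ r (Submodule.mem_iSup_of_mem 0 hone_S)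
    | ι v =>
        have hv : (v : A × A) = ((v.1, 0) : A × A) + ((0 : A), v.2) := by
          ext <;> simp
        rw [hv, map_add, map_add]
        exact add_mem (hMsup v.1) (hHsup v.2)
    | mul a b ha hb => rw [map_mul]; exact hmulsup _ ha _ hb
    | add a b ha hb => rw [map_add]; exact add_mem ha hb
  -- the differential condition
  have hφd : ∀ x : UEA k A 𝒜 br p, φ (Due x) = dB (φ x) := by
    intro x
    have hker : (⨆ i, S i) ≤
        LinearMap.ker (φ.toLinearMap ∘ₗ Due - dB ∘ₗ φ.toLinearMap) :=
      iSup_le fun i => inf_le_right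
    have := hker (htop x)
    simpa [LinearMap.mem_ker, LinearMap.sub_apply, sub_eq_zero] using this
  -- the grading condition, via the decomposition of `ℬue`
  haveI : DirectSum.Decomposition ℬue := hue.dga.decomp.some
  have hproj : ∀ (i : ℤ) (x : UEA k A 𝒜 br p),
      φ ((DirectSum.decompose ℬue x i : ℬue i) : UEA k A 𝒜 br p) ∈ ℬ i := by
    intro i x
    refine Submodule.iSup_induction
      (motive := fun x => φ ((DirectSum.decompose ℬue x i : ℬue i) : UEA k A 𝒜 br p) ∈ ℬ i)
      S (htop x) ?_ ?_ ?_
    · intro j y hyS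
      obtain ⟨hy1, hy2, -⟩ := (memS j y).1 hyS
      by_cases hij : j = i
      · subst hij
        rw [DirectSum.decompose_of_mem_same ℬue hy1]
        exact hy2
      · rw [DirectSum.decompose_of_mem_ne ℬue hy1 hij, map_zero]
        exact zero_mem _
    · show φ ((DirectSum.decompose ℬue (0 : UEA k A 𝒜 br p) i : ℬue i) : UEA k A 𝒜 br p) ∈ ℬ i
      rw [DirectSum.decompose_zero]
      simp only [DirectSum.zero_apply, ZeroMemClass.coe_zero, map_zero]
      exact zero_mem _
    · intro y z hy hz
      show φ ((DirectSum.decompose ℬue (y + z) i : ℬue i) : UEA k A 𝒜 br p) ∈ ℬ i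
      rw [DirectSum.decompose_add]
      simp only [DirectSum.add_apply, Submodule.coe_add, map_add]
      exact add_mem hy hz
  have hφgr : ∀ (i : ℤ) (x : UEA k A 𝒜 br p), x ∈ ℬue i → φ x ∈ ℬ i := by
    intro i x hx
    have := hproj i x
    rwa [DirectSum.decompose_of_mem_same ℬue hx] at this
  refine ⟨φ, ⟨hφgr, hφd, hφM, hφH⟩, ?_⟩
  -- uniqueness
  rintro ψ ⟨-, -, hψM, hψH⟩
  refine RingQuot.ringQuot_ext' k ψ φ ?_
  refine TensorAlgebra.hom_ext (LinearMap.ext fun v => ?_)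
  have hv : (v : A × A) = ((v.1, 0) : A × A) + ((0 : A), v.2) := by ext <;> simp
  have hMv : RingQuot.mkAlgHom k (UERel k A 𝒜 br p) (TensorAlgebra.ι k ((v.1, 0) : A × A)) =
      ueM k A 𝒜 br p v.1 := by simp [ueM]
  have hHv : RingQuot.mkAlgHom k (UERel k A 𝒜 br p) (TensorAlgebra.ι k (((0 : A), v.2) : A × A)) =
      ueH k A 𝒜 br p v.2 := by simp [ueH]
  simp only [LinearMap.coe_comp, Function.comp_apply, AlgHom.toLinearMap_apply,
    AlgHom.coe_comp]
  rw [hv]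
  simp only [map_add, hMv, hHv]
  rw [hψM, hψH, hφM, hφH]

end
end

section
/- Let A and B be DG Poisson algebras over a field k with Poisson brackets of the same degree p, and let (D, f, g) be a triple with property P with respect to the tensor product DG Poisson algebra A ⊗ B. Let f_A(a) = f(a⊗1), g_A(a) = g(a⊗1) for a ∈ A, and f_B(b) = f(1⊗b), g_B(b) = g(1⊗b) for b ∈ B, so that (D, f_A, g_A) has property P with respect to A and (D, f_B, g_B) has property P with respect to B, and let φ_A : A^{ue} → D and φ_B : B^{ue} → D be the unique DG-algebra maps with f_A = φ_A M, g_A = φ_A H and f_B = φ_B M, g_B = φ_B H given by the universal property. Then for all homogeneous x ∈ A^{ue} and y ∈ B^{ue}, φ_A(x)φ_B(y) = (−1)^{|x||y|} φ_B(y)φ_A(x). -/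
open scoped TensorProduct

noncomputable section

/-- `W`, together with the bilinear map `μ : M → N → W` (thought of as `m ⊗ n`), realizes the
tensor product of the graded vector spaces `M` and `N`: `μ` induces a linear bijection
`M ⊗[k] N ≃ W`, homogeneous tensors are homogeneous of the expected total degree, and every
homogeneous element of `W` is a sum of homogeneous tensors of that total degree. -/
structure RealizesGradedTensor (k : Type) [Field k]
    (M : Type) [AddCommGroup M] [Module k M]
    (N : Type) [AddCommGroup N] [Module k N]
    (W : Type) [AddCommGroup W] [Module k W]
    (𝒱M : ℤ → Submodule k M) (𝒱N : ℤ → Submodule k N) (𝒲 : ℤ → Submodule k W)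
    (μ : M →ₗ[k] N →ₗ[k] W) : Prop where
  bij : Function.Bijective (TensorProduct.lift μ)
  mem : ∀ (i j : ℤ) (m : M) (n : N), m ∈ 𝒱M i → n ∈ 𝒱N j → μ m n ∈ 𝒲 (i + j)
  span : ∀ nn : ℤ, (𝒲 nn : Set W) ⊆
    (Submodule.span k {w : W | ∃ (i j : ℤ) (m : M) (n : N),
      i + j = nn ∧ m ∈ 𝒱M i ∧ n ∈ 𝒱N j ∧ μ m n = w} : Submodule k W)

/-- `C`, together with the bilinear map `μ : A → B → C` (thought of as `a ⊗ b`), realizes the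
graded tensor product of the graded algebras `A` and `B`, with the Koszul-sign multiplication
`(a₁ ⊗ b₁)(a₂ ⊗ b₂) = (-1)^{|a₂||b₁|} (a₁a₂) ⊗ (b₁b₂)` and unit `1 ⊗ 1`. -/
structure RealizesGradedTensorAlg (k : Type) [Field k]
    (A : Type) [Ring A] [Algebra k A] (B : Type) [Ring B] [Algebra k B]
    (C : Type) [Ring C] [Algebra k C]
    (𝒜 : ℤ → Submodule k A) (ℬ : ℤ → Submodule k B) (𝒞 : ℤ → Submodule k C)
    (μ : A →ₗ[k] B →ₗ[k] C) : Prop where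
  toRealizesGradedTensor : RealizesGradedTensor k A B C 𝒜 ℬ 𝒞 μ
  one : μ 1 1 = 1
  mul : ∀ (i₁ j₁ i₂ j₂ : ℤ) (a₁ a₂ : A) (b₁ b₂ : B),
    a₁ ∈ 𝒜 i₁ → b₁ ∈ ℬ j₁ → a₂ ∈ 𝒜 i₂ → b₂ ∈ ℬ j₂ →
    μ a₁ b₁ * μ a₂ b₂ = ((-1 : k) ^ (i₂ * j₁)) • μ (a₁ * a₂) (b₁ * b₂)

section MyAux

variable {k : Type} [Field k]

lemma myNegOneZpowMulSelf (m : ℤ) : ((-1:k)^m) * ((-1:k)^m) = 1 := by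
  rw [← mul_zpow]; norm_num

lemma myFlipSign {D : Type} [Ring D] [Algebra k D] {X Y : D} {m : ℤ}
    (h : X = ((-1:k)^m) • Y) : Y = ((-1:k)^m) • X := by
  rw [h, smul_smul, myNegOneZpowMulSelf, one_smul]

/-- Submodule of elements commuting (with Koszul sign for degree `j`) with all
elements singled out by `P` (paired with their degrees). -/
def myCsub (k : Type) [Field k] (D : Type) [Ring D] [Algebra k D]
    (P : D → ℤ → Prop) (j : ℤ) : Submodule k D where
  carrier := {e | ∀ u i, P u i → e * u = ((-1:k) ^ (j * i)) • (u * e)}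
  add_mem' := by
    intro e e' he he' u i hu
    rw [add_mul, mul_add, he u i hu, he' u i hu, smul_add]
  zero_mem' := by intro u i hu; simp
  smul_mem' := by
    intro c e he u i hu
    rw [smul_mul_assoc, he u i hu, smul_comm, Algebra.mul_smul_comm]

lemma myOneMemCsub {D : Type} [Ring D] [Algebra k D] (P : D → ℤ → Prop) :
    (1:D) ∈ myCsub k D P 0 := by
  intro u i hu; simp

lemma myMulMemCsub {D : Type} [Ring D] [Algebra k D] {P : D → ℤ → Prop}
    {m n : ℤ} {e e' : D} (he : e ∈ myCsub k D P m) (he' : e' ∈ myCsub k D P n) :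
    e * e' ∈ myCsub k D P (m + n) := by
  intro u i hu
  have h1 := he u i hu
  have h2 := he' u i hu
  calc e * e' * u = e * (e' * u) := by rw [mul_assoc]
    _ = ((-1:k)^(n*i)) • (e * (u * e')) := by rw [h2, Algebra.mul_smul_comm]
    _ = ((-1:k)^(n*i)) • (((-1:k)^(m*i)) • (u * e) * e') := by
        rw [← mul_assoc, h1]
    _ = ((-1:k) ^ ((m+n)*i)) • (u * (e * e')) := by
        rw [smul_mul_assoc, smul_smul, ← zpow_add₀ (by norm_num : (-1:k) ≠ 0),
          mul_assoc]
        ring_nf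

/-- Projection lemma: if a family `W` refines a decomposition `ℰ` and spans everything,
then it contains each graded piece. -/
lemma myProjLe {V : Type} [AddCommGroup V] [Module k V]
    (ℰ : ℤ → Submodule k V) [DirectSum.Decomposition ℰ]
    (W : ℤ → Submodule k V) (hle : ∀ n, W n ≤ ℰ n)
    (htop : ∀ v : V, v ∈ ⨆ n, W n) (j : ℤ) : ℰ j ≤ W j := by
  intro y hy
  have h1 : ((DirectSum.decompose ℰ y j : ℰ j) : V) ∈ W j := by
    refine Submodule.iSup_induction (motive := fun v => ((DirectSum.decompose ℰ v j : ℰ j) : V) ∈ W j)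
      W (htop y) ?_ ?_ ?_
    · intro n v hv
      by_cases h : n = j
      · subst h
        rw [DirectSum.decompose_of_mem_same ℰ (hle n hv)]
        exact hv
      · rw [DirectSum.decompose_of_mem_ne ℰ (hle n hv) h]
        exact zero_mem _
    · simp
    · intro u v hu hv
      rw [DirectSum.decompose_add, DirectSum.add_apply, Submodule.coe_add]
      exact add_mem hu hv
  rwa [DirectSum.decompose_of_mem_same ℰ hy] at h1

end MyAux

lemma myMemCsub {k : Type} [Field k] {D : Type} [Ring D] [Algebra k D]
    {P : D → ℤ → Prop} {j : ℤ} {e : D} :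
    e ∈ myCsub k D P j ↔ ∀ u i, P u i → e * u = ((-1:k) ^ (j * i)) • (u * e) :=
  Iff.rfl
section MyEngine

/-- Engine: if `C` is a family of submodules of `D` containing `1`, closed under
multiplication (with additive degrees), and containing the images of the generators
of the universal enveloping algebra in the right degrees, then it contains the image
of each graded piece of the UEA. -/
lemma myEngine (k : Type) [Field k] (B : Type) [Ring B] [Algebra k B]
    (ℬ : ℤ → Submodule k B) [GradedAlgebra ℬ]
    (brB : B →ₗ[k] B →ₗ[k] B) (p : ℤ)
    (ℬB : ℤ → Submodule k (UEA k B ℬ brB p))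
    (hgm : SetLike.GradedMonoid ℬB)
    (hdec : Nonempty (DirectSum.Decomposition ℬB))
    (hm : ∀ (j : ℤ) (b : B), b ∈ ℬ j → ueM k B ℬ brB p b ∈ ℬB j)
    (hh : ∀ (j : ℤ) (b : B), b ∈ ℬ j → ueH k B ℬ brB p b ∈ ℬB (j+p))
    (D : Type) [Ring D] [Algebra k D] (φ : UEA k B ℬ brB p →ₐ[k] D)
    (C : ℤ → Submodule k D)
    (hC1 : (1:D) ∈ C 0)
    (hCmul : ∀ (m n : ℤ) (x y : D), x ∈ C m → y ∈ C n → x * y ∈ C (m+n))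
    (hCM : ∀ (j : ℤ) (b : B), b ∈ ℬ j → φ (ueM k B ℬ brB p b) ∈ C j)
    (hCH : ∀ (j : ℤ) (b : B), b ∈ ℬ j → φ (ueH k B ℬ brB p b) ∈ C (j+p)) :
    ∀ (j : ℤ) (y : UEA k B ℬ brB p), y ∈ ℬB j → φ y ∈ C j := by
  classical
  haveI := hgm
  haveI := hdec.some
  set W : ℤ → Submodule k (UEA k B ℬ brB p) :=
    fun n => ℬB n ⊓ (C n).comap φ.toLinearMap with hW
  have hWle : ∀ n, W n ≤ ℬB n := fun n => inf_le_left
  have hone : (1 : UEA k B ℬ brB p) ∈ W 0 :=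
    ⟨SetLike.one_mem_graded ℬB, by simpa using hC1⟩
  have hmemM : ∀ (n : ℤ) (b : B), b ∈ ℬ n → ueM k B ℬ brB p b ∈ W n :=
    fun n b hb => ⟨hm n b hb, hCM n b hb⟩
  have hmemH : ∀ (n : ℤ) (b : B), b ∈ ℬ n → ueH k B ℬ brB p b ∈ W (n+p) :=
    fun n b hb => ⟨hh n b hb, hCH n b hb⟩
  have hWmul : ∀ (m n : ℤ) (x y : UEA k B ℬ brB p),
      x ∈ W m → y ∈ W n → x * y ∈ W (m+n) := by
    intro m n x y hx hy
    refine ⟨SetLike.mul_mem_graded hx.1 hy.1, ?_⟩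
    have : φ (x*y) = φ x * φ y := map_mul φ x y
    simpa [Submodule.mem_comap, this] using hCmul m n _ _ hx.2 hy.2
  -- every element of the UEA lies in the supremum of the `W n`
  have hMsup : ∀ b : B, ueM k B ℬ brB p b ∈ ⨆ n, W n := by
    intro b
    have hrw : ueM k B ℬ brB p b = ∑ j ∈ (DirectSum.decompose ℬ b).support,
        ueM k B ℬ brB p ((DirectSum.decompose ℬ b) j : B) := by
      rw [← map_sum, DirectSum.sum_support_decompose]
    rw [hrw]
    exact Submodule.sum_mem _ fun j _ =>
      Submodule.mem_iSup_of_mem j (hmemM j _ (SetLike.coe_mem _))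
  have hHsup : ∀ b : B, ueH k B ℬ brB p b ∈ ⨆ n, W n := by
    intro b
    have hrw : ueH k B ℬ brB p b = ∑ j ∈ (DirectSum.decompose ℬ b).support,
        ueH k B ℬ brB p ((DirectSum.decompose ℬ b) j : B) := by
      rw [← map_sum, DirectSum.sum_support_decompose]
    rw [hrw]
    exact Submodule.sum_mem _ fun j _ =>
      Submodule.mem_iSup_of_mem (j+p) (hmemH j _ (SetLike.coe_mem _))
  have hmulsup : ∀ x y : UEA k B ℬ brB p,
      x ∈ ⨆ n, W n → y ∈ ⨆ n, W n → x * y ∈ ⨆ n, W n := by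
    intro x y hx hy
    have key : ∀ (m : ℤ) (x : UEA k B ℬ brB p), x ∈ W m →
        ∀ y ∈ ⨆ n, W n, x * y ∈ ⨆ n, W n := by
      intro m x hxm y hy
      refine Submodule.iSup_induction (motive := fun y => x * y ∈ ⨆ n, W n) W hy ?_ ?_ ?_
      · intro n z hz
        exact Submodule.mem_iSup_of_mem (m+n) (hWmul m n x z hxm hz)
      · simp
      · intro u v hu hv; rw [mul_add]; exact add_mem hu hv
    refine Submodule.iSup_induction (motive := fun x => x * y ∈ ⨆ n, W n) W hx ?_ ?_ ?_
    · intro m z hz; exact key m z hz y hy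
    · simp
    · intro u v hu hv; rw [add_mul]; exact add_mem hu hv
  have htop : ∀ z : UEA k B ℬ brB p, z ∈ ⨆ n, W n := by
    intro z
    obtain ⟨t, rfl⟩ := RingQuot.mkAlgHom_surjective k (UERel k B ℬ brB p) z
    induction t using TensorAlgebra.induction with
    | algebraMap r =>
        rw [AlgHom.commutes, Algebra.algebraMap_eq_smul_one]
        exact Submodule.smul_mem _ r (Submodule.mem_iSup_of_mem 0 hone)
    | ι x =>
        obtain ⟨b₁, b₂⟩ := x
        have hsplit : (TensorAlgebra.ι k (b₁, b₂) : TensorAlgebra k (B × B)) =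
            TensorAlgebra.ι k (b₁, (0:B)) + TensorAlgebra.ι k ((0:B), b₂) := by
          rw [← map_add]
          congr 1
          simp
        rw [hsplit, map_add]
        have h1 : (RingQuot.mkAlgHom k (UERel k B ℬ brB p))
            (TensorAlgebra.ι k (b₁, (0:B))) = ueM k B ℬ brB p b₁ := by
          simp [ueM]
        have h2 : (RingQuot.mkAlgHom k (UERel k B ℬ brB p))
            (TensorAlgebra.ι k ((0:B), b₂)) = ueH k B ℬ brB p b₂ := by
          simp [ueH]
        rw [h1, h2]
        exact add_mem (hMsup b₁) (hHsup b₂)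
    | mul a b ha hb =>
        rw [map_mul]
        exact hmulsup _ _ ha hb
    | add a b ha hb =>
        rw [map_add]
        exact add_mem ha hb
  have := myProjLe ℬB W hWle htop
  intro j y hy
  exact (this j hy).2

end MyEngine
/-- Let `A`, `B` be DG Poisson algebras with brackets of the same degree
`p` and `(D, f, g)` a `𝒫`-triple with respect to the tensor product DG Poisson algebra
`A ⊗ B` (realized by `T`).  With `f_A a = f (a ⊗ 1)`, `g_A a = g (a ⊗ 1)`,
`f_B b = f (1 ⊗ b)`, `g_B b = g (1 ⊗ b)`, the triples `(D, f_A, g_A)` and `(D, f_B, g_B)` have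
property `𝒫` with respect to `A` and `B`, and for the induced DG-algebra maps
`φ_A : A^{ue} → D`, `φ_B : B^{ue} → D` one has
`φ_A(x) φ_B(y) = (-1)^{|x||y|} φ_B(y) φ_A(x)` for all homogeneous `x ∈ A^{ue}`, `y ∈ B^{ue}`. -/
theorem phiA_phiB_graded_commute
    (k : Type) [Field k]
    (A : Type) [Ring A] [Algebra k A]
    (𝒜 : ℤ → Submodule k A) [GradedAlgebra 𝒜] (dA : A →ₗ[k] A)
    (brA : A →ₗ[k] A →ₗ[k] A)
    (B : Type) [Ring B] [Algebra k B]
    (ℬ : ℤ → Submodule k B) [GradedAlgebra ℬ] (dB : B →ₗ[k] B)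
    (brB : B →ₗ[k] B →ₗ[k] B) (p : ℤ)
    (hA : IsDGPoissonAlgebra k A 𝒜 dA brA p)
    (hB : IsDGPoissonAlgebra k B ℬ dB brB p)
    -- `T` realizes the tensor product DG Poisson algebra `A ⊗ B`
    (T : Type) [Ring T] [Algebra k T]
    (𝒯 : ℤ → Submodule k T) (μT : A →ₗ[k] B →ₗ[k] T)
    (hT : RealizesGradedTensorAlg k A B T 𝒜 ℬ 𝒯 μT)
    (dT : T →ₗ[k] T)
    (hdT : ∀ (i j : ℤ) (a : A) (b : B), a ∈ 𝒜 i → b ∈ ℬ j →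
      dT (μT a b) = μT (dA a) b + ((-1 : k) ^ i) • μT a (dB b))
    (brT : T →ₗ[k] T →ₗ[k] T)
    (hbrT : ∀ (i₁ j₁ i₂ j₂ : ℤ) (a₁ a₂ : A) (b₁ b₂ : B),
      a₁ ∈ 𝒜 i₁ → b₁ ∈ ℬ j₁ → a₂ ∈ 𝒜 i₂ → b₂ ∈ ℬ j₂ →
      brT (μT a₁ b₁) (μT a₂ b₂) =
        ((-1 : k) ^ ((i₂ + p) * j₁)) • μT (brA a₁ a₂) (b₁ * b₂) +
        ((-1 : k) ^ ((j₁ + p) * i₂)) • μT (a₁ * a₂) (brB b₁ b₂))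
    -- a `𝒫`-triple `(D, f, g)` with respect to `A ⊗ B`
    (D : Type) [Ring D] [Algebra k D]
    (𝒟 : ℤ → Submodule k D) (dD : D →ₗ[k] D)
    (hD : IsDGAlgebra k D 𝒟 dD)
    (f g : T →ₗ[k] D)
    (hfg : IsPTriple k T D 𝒯 dT brT p 𝒟 dD f g)
    -- the restricted triples along `a ↦ a ⊗ 1` and `b ↦ 1 ⊗ b` have property `𝒫`
    (hPA : IsPTriple k A D 𝒜 dA brA p 𝒟 dD
      (f.comp (μT.flip 1)) (g.comp (μT.flip 1)))
    (hPB : IsPTriple k B D ℬ dB brB p 𝒟 dD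
      (f.comp (μT 1)) (g.comp (μT 1)))
    -- the canonical DG-algebra structures on `A^{ue}` and `B^{ue}`
    (ℬA : ℤ → Submodule k (UEA k A 𝒜 brA p))
    (DA : UEA k A 𝒜 brA p →ₗ[k] UEA k A 𝒜 brA p)
    (hueA : IsUEADG k A 𝒜 dA brA p ℬA DA)
    (ℬB : ℤ → Submodule k (UEA k B ℬ brB p))
    (DB : UEA k B ℬ brB p →ₗ[k] UEA k B ℬ brB p)
    (hueB : IsUEADG k B ℬ dB brB p ℬB DB)
    -- the DG-algebra maps `φ_A`, `φ_B` given by the universal property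
    (φA : UEA k A 𝒜 brA p →ₐ[k] D)
    (hφA : (∀ a : A, φA (ueM k A 𝒜 brA p a) = f (μT a 1)) ∧
           (∀ a : A, φA (ueH k A 𝒜 brA p a) = g (μT a 1)))
    (φB : UEA k B ℬ brB p →ₐ[k] D)
    (hφB : (∀ b : B, φB (ueM k B ℬ brB p b) = f (μT 1 b)) ∧
           (∀ b : B, φB (ueH k B ℬ brB p b) = g (μT 1 b))) :
    ∀ (i j : ℤ) (x : UEA k A 𝒜 brA p) (y : UEA k B ℬ brB p),
      x ∈ ℬA i → y ∈ ℬB j →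
      φA x * φB y = ((-1 : k) ^ (i * j)) • (φB y * φA x) := by
  classical
  -- basic homogeneity facts
  have h1A : (1:A) ∈ 𝒜 (0:ℤ) := SetLike.one_mem_graded 𝒜
  have h1B : (1:B) ∈ ℬ (0:ℤ) := SetLike.one_mem_graded ℬ
  -- brackets with 1 vanish
  have hbrA1 : ∀ (i : ℤ) (a : A), a ∈ 𝒜 i → brA a 1 = 0 := by
    intro i a ha
    have h := hA.poisson i 0 0 a 1 1 ha h1A h1A
    rw [mul_one, mul_one, mul_zero, zpow_zero, one_smul, one_mul] at h
    exact (left_eq_add.mp h)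
  have hbrA1' : ∀ (i : ℤ) (a : A), a ∈ 𝒜 i → brA 1 a = 0 := by
    intro i a ha
    rw [hA.antisymm 0 i 1 a h1A ha, hbrA1 i a ha, smul_zero, neg_zero]
  have hbrB1 : ∀ (j : ℤ) (b : B), b ∈ ℬ j → brB b 1 = 0 := by
    intro j b hb
    have h := hB.poisson j 0 0 b 1 1 hb h1B h1B
    rw [mul_one, mul_one, mul_zero, zpow_zero, one_smul, one_mul] at h
    exact (left_eq_add.mp h)
  have hbrB1' : ∀ (j : ℤ) (b : B), b ∈ ℬ j → brB 1 b = 0 := by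
    intro j b hb
    rw [hB.antisymm 0 j 1 b h1B hb, hbrB1 j b hb, smul_zero, neg_zero]
  -- degrees of the basic tensors
  have hmu : ∀ (i : ℤ) (a : A), a ∈ 𝒜 i → μT a 1 ∈ 𝒯 i := by
    intro i a ha
    simpa using hT.toRealizesGradedTensor.mem i 0 a 1 ha h1B
  have hmv : ∀ (j : ℤ) (b : B), b ∈ ℬ j → μT 1 b ∈ 𝒯 j := by
    intro j b hb
    simpa using hT.toRealizesGradedTensor.mem 0 j 1 b h1A hb
  -- the brackets of basic tensors from the two sides vanish
  have hbrT0 : ∀ (i j : ℤ) (a : A) (b : B), a ∈ 𝒜 i → b ∈ ℬ j →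
      brT (μT a 1) (μT 1 b) = 0 := by
    intro i j a b ha hb
    have h := hbrT i 0 0 j a 1 1 b ha h1B h1A hb
    rw [hbrA1 i a ha, hbrB1' j b hb] at h
    simpa using h
  have hbrT0' : ∀ (i j : ℤ) (a : A) (b : B), a ∈ 𝒜 i → b ∈ ℬ j →
      brT (μT 1 b) (μT a 1) = 0 := by
    intro i j a b ha hb
    have h := hbrT 0 j i 0 1 a b 1 h1A hb ha h1B
    rw [hbrA1' i a ha, hbrB1 j b hb] at h
    simpa using h
  -- the four basic commutation relations in D
  have hff : ∀ (i j : ℤ) (a : A) (b : B), a ∈ 𝒜 i → b ∈ ℬ j →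
      f (μT a 1) * f (μT 1 b) = ((-1:k) ^ (i*j)) • (f (μT 1 b) * f (μT a 1)) := by
    intro i j a b ha hb
    have h1 : μT a 1 * μT 1 b = μT a b := by
      simpa using hT.mul i 0 0 j a 1 1 b ha h1B h1A hb
    have h2 : μT 1 b * μT a 1 = ((-1:k) ^ (i*j)) • μT a b := by
      simpa using hT.mul 0 j i 0 1 a b 1 h1A hb ha h1B
    have h3 : f (μT 1 b) * f (μT a 1) = ((-1:k) ^ (i*j)) • (f (μT a 1) * f (μT 1 b)) := by
      rw [← hfg.f_mul, ← hfg.f_mul, h2, h1, map_smul]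
    exact myFlipSign h3
  have hgf : ∀ (i j : ℤ) (a : A) (b : B), a ∈ 𝒜 i → b ∈ ℬ j →
      g (μT a 1) * f (μT 1 b) = ((-1:k) ^ ((i+p)*j)) • (f (μT 1 b) * g (μT a 1)) := by
    intro i j a b ha hb
    have h := hfg.f_br i j (μT a 1) (μT 1 b) (hmu i a ha) (hmv j b hb)
    rw [hbrT0 i j a b ha hb, map_zero] at h
    exact sub_eq_zero.mp h.symm
  have hgf' : ∀ (i j : ℤ) (a : A) (b : B), a ∈ 𝒜 i → b ∈ ℬ j →
      g (μT 1 b) * f (μT a 1) = ((-1:k) ^ ((j+p)*i)) • (f (μT a 1) * g (μT 1 b)) := by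
    intro i j a b ha hb
    have h := hfg.f_br j i (μT 1 b) (μT a 1) (hmv j b hb) (hmu i a ha)
    rw [hbrT0' i j a b ha hb, map_zero] at h
    exact sub_eq_zero.mp h.symm
  have hgg : ∀ (i j : ℤ) (a : A) (b : B), a ∈ 𝒜 i → b ∈ ℬ j →
      g (μT a 1) * g (μT 1 b) = ((-1:k) ^ ((i+p)*(j+p))) • (g (μT 1 b) * g (μT a 1)) := by
    intro i j a b ha hb
    have h := hfg.g_br i j (μT a 1) (μT 1 b) (hmu i a ha) (hmv j b hb)
    rw [hbrT0 i j a b ha hb, map_zero] at h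
    exact sub_eq_zero.mp h.symm
  -- the generators on the A-side, with their degrees
  set PA : D → ℤ → Prop := fun e m =>
    (∃ a : A, a ∈ 𝒜 m ∧ e = f (μT a 1)) ∨
    (∃ (i : ℤ) (a : A), m = i + p ∧ a ∈ 𝒜 i ∧ e = g (μT a 1)) with hPA_def
  -- Step B: every homogeneous image `φB y` sign-commutes with the A-side generators
  have RB : ∀ (j : ℤ) (y : UEA k B ℬ brB p), y ∈ ℬB j →
      φB y ∈ myCsub k D PA j := by
    refine myEngine k B ℬ brB p ℬB hueB.dga.graded_monoid hueB.dga.decomp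
      hueB.m_mem hueB.h_mem D φB (fun j => myCsub k D PA j)
      (myOneMemCsub PA) (fun m n x y hx hy => myMulMemCsub hx hy) ?_ ?_
    · intro j b hb
      rw [hφB.1 b]
      rw [myMemCsub]
      rintro e m (⟨a, ha, rfl⟩ | ⟨i, a, rfl, ha, rfl⟩)
      · have h := myFlipSign (hff m j a b ha hb)
        rw [show j * m = m * j from mul_comm j m]
        exact h
      · have h := myFlipSign (hgf i j a b ha hb)
        rw [show j * (i+p) = (i+p) * j from mul_comm j (i+p)]
        exact h
    · intro j b hb
      rw [hφB.2 b]
      rw [myMemCsub]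
      rintro e m (⟨a, ha, rfl⟩ | ⟨i, a, rfl, ha, rfl⟩)
      · exact hgf' m j a b ha hb
      · have h := myFlipSign (hgg i j a b ha hb)
        rw [show (j+p) * (i+p) = (i+p) * (j+p) from mul_comm (j+p) (i+p)]
        exact h
  -- the images of homogeneous elements of B^{ue}, with their degrees
  set PB : D → ℤ → Prop := fun e m =>
    ∃ y : UEA k B ℬ brB p, y ∈ ℬB m ∧ e = φB y with hPB_def
  -- Step C: every homogeneous image `φA x` sign-commutes with all `φB y`
  have RA : ∀ (i : ℤ) (x : UEA k A 𝒜 brA p), x ∈ ℬA i →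
      φA x ∈ myCsub k D PB i := by
    refine myEngine k A 𝒜 brA p ℬA hueA.dga.graded_monoid hueA.dga.decomp
      hueA.m_mem hueA.h_mem D φA (fun i => myCsub k D PB i)
      (myOneMemCsub PB) (fun m n x y hx hy => myMulMemCsub hx hy) ?_ ?_
    · intro i a ha
      rw [hφA.1 a]
      rw [myMemCsub]
      rintro e m ⟨y, hy, rfl⟩
      have h := myMemCsub.mp (RB m y hy) (f (μT a 1)) i (Or.inl ⟨a, ha, rfl⟩)
      have h2 := myFlipSign h
      rw [show i * m = m * i from mul_comm i m]
      exact h2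
    · intro i a ha
      rw [hφA.2 a]
      rw [myMemCsub]
      rintro e m ⟨y, hy, rfl⟩
      have h := myMemCsub.mp (RB m y hy) (g (μT a 1)) (i+p)
        (Or.inr ⟨i, a, rfl, ha, rfl⟩)
      have h2 := myFlipSign h
      rw [show (i+p) * m = m * (i+p) from mul_comm (i+p) m]
      exact h2
  intro i j x y hx hy
  exact myMemCsub.mp (RA i x hx) (φB y) j ⟨y, hy, rfl⟩

end
end
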